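/- Let W be a word over a totally ordered alphabet. Suppose W contains 2n−1 pairwise disjoint subwords of the form x^{p_1}v'_1, …, x^{p_{2n-1}}v'_{2n-1} where each p_i > n, x is a fixed nonempty word, and each v'_i is a word of the same length as x that is comparable with x (not a prefix relation) and distinct as specified. Then if among v'_1,…,v'_{2n-1} at least n are lexicographically greater than x, W is n-divisible; the same holds if at least n are lexicographically smaller. In particular, if W contains 2n−1 disjoint subwords, each a power z^m with m > n, whose periods are pairwise not strongly comparable, then W is n-divisible. -/

import Mathlib

variable {α : Type*} [LinearOrder α]

/-- `u` repeated `d` times. -/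
def wpow (u : List α) (d : ℕ) : List α := (List.replicate d u).flatten

/-- Two words are comparable if neither is a prefix of the other. -/
def WComparable (u v : List α) : Prop := ¬ u <+: v ∧ ¬ v <+: u

/-- A word `W` is `n`-divisible if `W = v ++ u₁ ++ ⋯ ++ uₙ` with the nonempty
words `u₁ ≻ u₂ ≻ ⋯ ≻ uₙ` strictly decreasing in the lexicographic order. -/
def NDivisible (n : ℕ) (W : List α) : Prop :=
  ∃ (v : List α) (u : Fin n → List α), (∀ i, u i ≠ []) ∧
    W = v ++ (List.ofFn u).flatten ∧
    ∀ i j : Fin n, i < j → List.Lex (· < ·) (u j) (u i)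

lemma wpow_succ (x : List α) (d : ℕ) : wpow x (d + 1) = x ++ wpow x d := by
  show (List.replicate (d + 1) x).flatten = x ++ (List.replicate d x).flatten
  rw [List.replicate_succ, List.flatten_cons]

lemma wpow_add (x : List α) (m k : ℕ) : wpow x (m + k) = wpow x m ++ wpow x k := by
  show (List.replicate (m + k) x).flatten = (List.replicate m x).flatten ++ (List.replicate k x).flatten
  rw [List.replicate_add, List.flatten_append]

lemma wpow_length (x : List α) (d : ℕ) : (wpow x d).length = d * x.length := by
  induction d with
  | zero => simp [wpow]
  | succ d ih => rw [wpow_succ, List.length_append, ih]; ring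

lemma lex_append : ∀ {x v : List α}, List.Lex (· < ·) x v → x.length = v.length →
    ∀ A B : List α, List.Lex (· < ·) (x ++ A) (v ++ B) := by
  intro x v h
  induction h with
  | nil => intro hl; simp at hl
  | rel h => intro _ A B; exact List.Lex.rel h
  | cons h ih => intro hl A B; exact List.Lex.cons (ih (by simpa using hl) A B)

lemma lex_prepend (c : List α) {s t : List α} (h : List.Lex (· < ·) s t) :
    List.Lex (· < ·) (c ++ s) (c ++ t) := by
  induction c with
  | nil => exact h
  | cons a c ih => exact List.Lex.cons ih

lemma segs_join (W : List α) : ∀ (n : ℕ) (t : ℕ → ℕ),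
    (∀ k, k < n → t k ≤ t (k + 1)) → t n = W.length →
    W = W.take (t 0) ++
      (List.ofFn (fun k : Fin n => (W.drop (t k)).take (t (k + 1) - t k))).flatten := by
  intro n
  induction n with
  | zero =>
    intro t _ hend
    simp [List.take_of_length_le hend.ge]
  | succ n ih =>
    intro t hmono hend
    have h1 := ih (fun k => t (k + 1)) (fun k hk => hmono (k + 1) (Nat.succ_lt_succ hk)) hend
    have h0 : t 0 ≤ t 1 := hmono 0 (Nat.succ_pos n)
    have h2 : W.take (t 1) = W.take (t 0) ++ (W.drop (t 0)).take (t 1 - t 0) := by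
      rw [← List.take_add]
      congr 1
      omega
    rw [List.ofFn_succ, List.flatten_cons, ← List.append_assoc]
    simp only [Fin.val_succ, Fin.val_zero, Nat.zero_add] at h1 ⊢
    rw [← h2]
    exact h1

lemma core (n : ℕ) (W x : List α)
    (q P a : ℕ → ℕ) (w : ℕ → List α)
    (hPa : ∀ k, k < n → a k ≤ P k)
    (hwne : ∀ k, k < n → w k ≠ [])
    (hin : ∀ k, k < n → q k + (P k + 1) * x.length ≤ W.length)
    (hocc : ∀ k, k < n → (W.drop (q k)).take ((P k + 1) * x.length) = wpow x (P k) ++ w k)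
    (hdisj : ∀ k, k + 1 < n → q k + (P k + 1) * x.length ≤ q (k + 1))
    (hlex : ∀ i j, i < j → j < n → ∀ A B : List α,
       List.Lex (· < ·) (wpow x (a j) ++ (w j ++ A)) (wpow x (a i) ++ (w i ++ B))) :
    NDivisible n W := by
  classical
  set L := x.length with hL
  set t : ℕ → ℕ := fun k => if h : k < n then q k + (P k - a k) * L else W.length with ht
  have htlt : ∀ k, k < n → t k = q k + (P k - a k) * L := fun k h => dif_pos h
  have htn : ∀ k, n ≤ k → t k = W.length := fun k h => dif_neg (by omega)
  have key1 : ∀ k, k < n → t k + (a k + 1) * L ≤ t (k + 1) := by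
    intro k hk
    have hpa := hPa k hk
    have e1 : t k + (a k + 1) * L = q k + (P k + 1) * L := by
      rw [htlt k hk]
      have e2 : (P k - a k) * L + (a k + 1) * L = (P k + 1) * L := by
        rw [← Nat.add_mul]
        congr 1
        omega
      omega
    rw [e1]
    by_cases h2 : k + 1 < n
    · rw [htlt _ h2]
      have := hdisj k h2
      omega
    · rw [htn _ (by omega)]
      exact hin k hk
  have key2 : ∀ k, k < n → t k ≤ t (k + 1) :=
    fun k hk => le_trans (Nat.le_add_right _ _) (key1 k hk)
  have key3 : ∀ k, k < n → (W.drop (t k)).take ((a k + 1) * L) = wpow x (a k) ++ w k := by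
    intro k hk
    have hpa := hPa k hk
    have hc : (P k - a k) * L + (a k + 1) * L = (P k + 1) * L := by
      rw [← Nat.add_mul]
      congr 1
      omega
    rw [htlt k hk, ← List.drop_drop, List.take_drop, hc, hocc k hk]
    have hsplit : wpow x (P k) = wpow x (P k - a k) ++ wpow x (a k) := by
      rw [← wpow_add]
      congr 1
      omega
    rw [hsplit, List.append_assoc]
    have hlen : (P k - a k) * L = (wpow x (P k - a k)).length := (wpow_length x _).symm
    rw [hlen, List.drop_left]
  have key4 : ∀ k, k < n → (W.drop (t k)).take (t (k + 1) - t k)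
      = wpow x (a k) ++ (w k ++
          (W.drop (t k + (a k + 1) * L)).take (t (k + 1) - t k - (a k + 1) * L)) := by
    intro k hk
    have h1 := key1 k hk
    have e : t (k + 1) - t k = (a k + 1) * L + (t (k + 1) - t k - (a k + 1) * L) := by omega
    conv_lhs => rw [e]
    rw [List.take_add, key3 k hk, List.drop_drop, List.append_assoc]
  refine ⟨W.take (t 0), fun k : Fin n => (W.drop (t k)).take (t ((k : ℕ) + 1) - t k), ?_, ?_, ?_⟩
  · intro k hcon
    have hc : (W.drop (t (k : ℕ))).take (t ((k : ℕ) + 1) - t (k : ℕ)) = [] := hcon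
    rw [key4 k k.isLt] at hc
    simp only [List.append_eq_nil_iff] at hc
    exact hwne k k.isLt hc.2.1
  · exact segs_join W n t key2 (htn n le_rfl)
  · intro i j hij
    show List.Lex (· < ·) ((W.drop (t (j : ℕ))).take (t ((j : ℕ) + 1) - t (j : ℕ)))
      ((W.drop (t (i : ℕ))).take (t ((i : ℕ) + 1) - t (i : ℕ)))
    rw [key4 _ i.isLt, key4 _ j.isLt]
    exact hlex i j hij j.isLt _ _

/-- If `W` contains `2n - 1` pairwise disjoint subwords `x ^ pᵢ ++ v'ᵢ`, with
`pᵢ > n`, `x` a fixed nonempty word and each `v'ᵢ` of the same length as `x` and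
comparable with `x`, and if among the `v'ᵢ` at least `n` are lexicographically
greater than `x` (or at least `n` are lexicographically smaller than `x`), then
`W` is `n`-divisible. -/
theorem stmt13 (n : ℕ) (hn : 1 ≤ n) (W x : List α) (hx : x ≠ [])
    (p : Fin (2 * n - 1) → ℕ) (hp : ∀ i, n < p i)
    (v' : Fin (2 * n - 1) → List α) (hvlen : ∀ i, (v' i).length = x.length)
    (hcomp : ∀ i, WComparable x (v' i))
    (pos : Fin (2 * n - 1) → ℕ)
    (hin : ∀ i, pos i + (wpow x (p i) ++ v' i).length ≤ W.length)
    (hocc : ∀ i, (W.drop (pos i)).take (wpow x (p i) ++ v' i).length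
      = wpow x (p i) ++ v' i)
    (hdisj : ∀ i j, i < j → pos i + (wpow x (p i) ++ v' i).length ≤ pos j)
    (hmaj : (∃ S : Finset (Fin (2 * n - 1)), n ≤ S.card ∧
              ∀ i ∈ S, List.Lex (· < ·) x (v' i)) ∨
            (∃ S : Finset (Fin (2 * n - 1)), n ≤ S.card ∧
              ∀ i ∈ S, List.Lex (· < ·) (v' i) x)) :
    NDivisible n W := by
  classical
  have hlen : ∀ i, (wpow x (p i) ++ v' i).length = (p i + 1) * x.length := by
    intro i
    rw [List.length_append, wpow_length, hvlen]
    ring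
  have hvne : ∀ i, v' i ≠ [] := by
    intro i h
    apply hx
    have := hvlen i
    rw [h] at this
    simpa [List.length_eq_zero_iff] using this.symm
  rcases hmaj with ⟨S, hScard, hSlex⟩ | ⟨S, hScard, hSlex⟩
  · -- at least n with x < v' i : exponents k + 1 increasing
    obtain ⟨T, hTS, hTcard⟩ := Finset.exists_subset_card_eq hScard
    set e := T.orderEmbOfFin hTcard with he
    refine core n W x
      (fun k => if h : k < n then pos (e ⟨k, h⟩) else 0)
      (fun k => if h : k < n then p (e ⟨k, h⟩) else 0)
      (fun k => k + 1)
      (fun k => if h : k < n then v' (e ⟨k, h⟩) else [])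
      ?_ ?_ ?_ ?_ ?_ ?_
    · intro k hk
      simp only [dif_pos hk]
      have := hp (e ⟨k, hk⟩)
      omega
    · intro k hk
      simp only [dif_pos hk]
      exact hvne _
    · intro k hk
      simp only [dif_pos hk]
      have h := hin (e ⟨k, hk⟩)
      rwa [hlen] at h
    · intro k hk
      simp only [dif_pos hk]
      have h := hocc (e ⟨k, hk⟩)
      rwa [hlen] at h
    · intro k hk
      simp only [dif_pos hk, dif_pos (show k < n by omega)]
      have hlt : e ⟨k, by omega⟩ < e ⟨k + 1, hk⟩ :=
        e.strictMono (Fin.mk_lt_mk.mpr (Nat.lt_succ_self k))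
      have h := hdisj _ _ hlt
      rwa [hlen] at h
    · intro i j hij hjn A B
      have hin' : i < n := lt_trans hij hjn
      simp only [dif_pos hjn, dif_pos hin']
      have hmem : e ⟨i, hin'⟩ ∈ S := hTS (Finset.orderEmbOfFin_mem T hTcard _)
      have hlexi := hSlex _ hmem
      have hsplit : wpow x (j + 1) = wpow x (i + 1) ++ (x ++ wpow x (j - i - 1)) := by
        rw [← wpow_succ, ← wpow_add]
        congr 1
        omega
      rw [hsplit, List.append_assoc, List.append_assoc]
      exact lex_prepend _ (lex_append hlexi (hvlen _).symm _ _)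
  · -- at least n with v' i < x : exponents n - k decreasing
    obtain ⟨T, hTS, hTcard⟩ := Finset.exists_subset_card_eq hScard
    set e := T.orderEmbOfFin hTcard with he
    refine core n W x
      (fun k => if h : k < n then pos (e ⟨k, h⟩) else 0)
      (fun k => if h : k < n then p (e ⟨k, h⟩) else 0)
      (fun k => n - k)
      (fun k => if h : k < n then v' (e ⟨k, h⟩) else [])
      ?_ ?_ ?_ ?_ ?_ ?_
    · intro k hk
      simp only [dif_pos hk]
      have := hp (e ⟨k, hk⟩)
      omega
    · intro k hk
      simp only [dif_pos hk]
      exact hvne _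
    · intro k hk
      simp only [dif_pos hk]
      have h := hin (e ⟨k, hk⟩)
      rwa [hlen] at h
    · intro k hk
      simp only [dif_pos hk]
      have h := hocc (e ⟨k, hk⟩)
      rwa [hlen] at h
    · intro k hk
      simp only [dif_pos hk, dif_pos (show k < n by omega)]
      have hlt : e ⟨k, by omega⟩ < e ⟨k + 1, hk⟩ :=
        e.strictMono (Fin.mk_lt_mk.mpr (Nat.lt_succ_self k))
      have h := hdisj _ _ hlt
      rwa [hlen] at h
    · intro i j hij hjn A B
      have hin' : i < n := lt_trans hij hjn
      simp only [dif_pos hjn, dif_pos hin']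
      have hmem : e ⟨j, hjn⟩ ∈ S := hTS (Finset.orderEmbOfFin_mem T hTcard _)
      have hlexj := hSlex _ hmem
      have hsplit : wpow x (n - i) = wpow x (n - j) ++ (x ++ wpow x (j - i - 1)) := by
        rw [← wpow_succ, ← wpow_add]
        congr 1
        omega
      rw [hsplit, List.append_assoc, List.append_assoc]
      exact lex_prepend _ (lex_append hlexj (hvlen _) _ _)
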